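/- A subset \tilde{x} of the unit clauses Σ_x encoding an instance x with f(x)=0 is a sufficient reason for the prediction (i.e., every complete extension of \tilde{x} is predicted 0 by f, and \tilde{x} is minimal with this property) if and only if \tilde{x} together with Σ_f forms a minimal unsatisfiable subset among the soft clauses Σ_x, i.e., Σ_f ∪ \tilde{x} is unsatisfiable and Σ_f ∪ \tilde{x}' is satisfiable for every proper subset \tilde{x}' ⊂ \tilde{x}. -/
import Mathlib


abbrev Clause (n : ℕ) := (Fin n → Bool) → Prop

def Models {n : ℕ} (Sig : Set (Clause n)) (a : Fin n → Bool) : Prop := ∀ c ∈ Sig, c a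

/-- `a` agrees with `x` on the feature set `T` (i.e. `a` is a completion of the
partial assignment obtained by restricting `x` to `T`). -/
def Agrees {n : ℕ} (x : Fin n → Bool) (T : Set (Fin n)) (a : Fin n → Bool) : Prop :=
  ∀ i ∈ T, a i = x i

/-- The partial assignment of `x` with domain `T` is a sufficient reason for `f x = 0`:
every completion is predicted 0, and `T` is minimal with this property. -/
def IsSufficientReason {n : ℕ} (f : (Fin n → Bool) → Bool) (x : Fin n → Bool)
    (T : Set (Fin n)) : Prop :=
  (∀ a, Agrees x T a → f a = false) ∧
  ∀ T' ⊂ T, ¬ (∀ a, Agrees x T' a → f a = false)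

/-- The subset of unit clauses of `Sigx` with domain `T` is a MUS relative to hard clauses `Sigf`:
`Sigf` together with the unit clauses on `T` is unsatisfiable, and this fails for every proper
subset of `T`. -/
def IsMUSForInstance {n : ℕ} (Sigf : Set (Clause n)) (x : Fin n → Bool)
    (T : Set (Fin n)) : Prop :=
  (¬ ∃ a, Models Sigf a ∧ Agrees x T a) ∧
  ∀ T' ⊂ T, ∃ a, Models Sigf a ∧ Agrees x T' a

/-- Proposition 1: sufficient reasons of a negatively predicted instance
are exactly the MUSes of `Sigf ∪ Sigx` among the soft clauses `Sigx`. -/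
theorem sufficient_reason_iff_MUS {n : ℕ}
    (f : (Fin n → Bool) → Bool) (Sigf : Set (Clause n))
    (henc : ∀ a : Fin n → Bool, f a = true ↔ Models Sigf a)
    (x : Fin n → Bool) (hx : f x = false) (T : Set (Fin n)) :
    IsSufficientReason f x T ↔ IsMUSForInstance Sigf x T := by
  have key : ∀ a, f a = false ↔ ¬ Models Sigf a := by
    intro a
    rw [← henc a]
    cases f a <;> simp
  constructor
  · rintro ⟨h1, h2⟩
    constructor
    · rintro ⟨a, hM, hA⟩
      exact (key a).mp (h1 a hA) hM
    · intro T' hT'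
      have := h2 T' hT'
      push_neg at this
      obtain ⟨a, hA, hf⟩ := this
      exact ⟨a, (henc a).mp (by simpa using hf), hA⟩
  · rintro ⟨h1, h2⟩
    constructor
    · intro a hA
      rw [key]
      intro hM
      exact h1 ⟨a, hM, hA⟩
    · intro T' hT' hall
      obtain ⟨a, hM, hA⟩ := h2 T' hT'
      exact (key a).mp (hall a hA) hM
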